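/- Let n₋, n₀, n₊ be natural numbers, B₊ a real n₀ × n₊ matrix, B₋ a real n₋ × n₀ matrix, and W₋, W₀, W₊ diagonal matrices of sizes n₋, n₀, n₊ with strictly positive diagonal entries. Let φ : ℝ → ℝ be differentiable and x ∈ ℝ^{n₀} a point such that there exist real numbers α > 0 and β > 0 with every entry of φ'(B₊ᵀ x) equal to α and every entry of φ'(B₋ W₀ x) equal to β. Then the linearization matrix L_x = −[ W₀⁻¹ B₊ W₊ diag(φ'(B₊ᵀ x)) B₊ᵀ + B₋ᵀ W₋⁻¹ diag(φ'(B₋ W₀ x)) B₋ W₀ ] is negative semidefinite with respect to the W₀-weighted inner product: for every z ∈ ℝ^{n₀}, ⟨W₀ z, L_x z⟩ ≤ 0. -/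

import Mathlib

open Matrix BigOperators

/-- If at a point `x` the componentwise derivatives `φ'(B₊ᵀx)` and `φ'(B₋W₀x)`
are constant vectors with positive entries `α` and `β`, then the linearization matrix
`L_x = −[W₀⁻¹B₊W₊ diag(φ'(B₊ᵀx)) B₊ᵀ + B₋ᵀW₋⁻¹ diag(φ'(B₋W₀x)) B₋W₀]`
is negative semidefinite with respect to the `W₀`-weighted inner product:
`⟨W₀z, L_x z⟩ ≤ 0` for all `z`. -/
theorem linearization_negative_semidefinite_of_constant_derivatives
    (nm n0 np : ℕ)
    (Bp : Matrix (Fin n0) (Fin np) ℝ) (Bm : Matrix (Fin nm) (Fin n0) ℝ)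
    (wm : Fin nm → ℝ) (w0 : Fin n0 → ℝ) (wp : Fin np → ℝ)
    (hwm : ∀ i, 0 < wm i) (hw0 : ∀ i, 0 < w0 i) (hwp : ∀ i, 0 < wp i)
    (φ : ℝ → ℝ) (hφ : Differentiable ℝ φ)
    (x : Fin n0 → ℝ) (α β : ℝ) (hα : 0 < α) (hβ : 0 < β)
    (hαconst : ∀ i, deriv φ (Bp.transpose.mulVec x i) = α)
    (hβconst : ∀ j, deriv φ (Bm.mulVec ((Matrix.diagonal w0).mulVec x) j) = β) :
    ∀ z : Fin n0 → ℝ,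
      ((Matrix.diagonal w0).mulVec z) ⬝ᵥ
        ((-((Matrix.diagonal fun i => (w0 i)⁻¹) * Bp * Matrix.diagonal wp
              * Matrix.diagonal (fun i => deriv φ (Bp.transpose.mulVec x i)) * Bp.transpose
            + Bm.transpose * (Matrix.diagonal fun j => (wm j)⁻¹)
              * Matrix.diagonal
                  (fun j => deriv φ (Bm.mulVec ((Matrix.diagonal w0).mulVec x) j))
              * Bm * Matrix.diagonal w0)).mulVec z) ≤ 0 := by
  intro z
  have hda : (Matrix.diagonal (fun i => deriv φ (Bp.transpose.mulVec x i)))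
      = Matrix.diagonal (fun _ : Fin np => α) := by
    rw [funext hαconst]
  have hdb : (Matrix.diagonal
        (fun j => deriv φ (Bm.mulVec ((Matrix.diagonal w0).mulVec x) j)))
      = Matrix.diagonal (fun _ : Fin nm => β) := by
    rw [funext hβconst]
  rw [hda, hdb]
  set M : Matrix (Fin n0) (Fin n0) ℝ :=
    (Matrix.diagonal fun i => (w0 i)⁻¹) * Bp * Matrix.diagonal wp
        * Matrix.diagonal (fun _ : Fin np => α) * Bp.transpose
      + Bm.transpose * (Matrix.diagonal fun j => (wm j)⁻¹)
        * Matrix.diagonal (fun _ : Fin nm => β) * Bm * Matrix.diagonal w0 with hM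
  -- rewrite the quadratic form
  have key : ((Matrix.diagonal w0).mulVec z) ⬝ᵥ M.mulVec z
      = z ⬝ᵥ ((Matrix.diagonal w0 * M).mulVec z) := by
    rw [← Matrix.diagonal_transpose w0, Matrix.mulVec_transpose,
      Matrix.dotProduct_mulVec, ← Matrix.mulVec_mulVec, Matrix.dotProduct_mulVec,
      Matrix.diagonal_transpose, Matrix.dotProduct_mulVec]
  -- W₀ * M = P1 + P2 with both PosSemidef-shaped
  have hW : Matrix.diagonal w0 * Matrix.diagonal (fun i => (w0 i)⁻¹)
      = (1 : Matrix (Fin n0) (Fin n0) ℝ) := by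
    rw [Matrix.diagonal_mul_diagonal, ← Matrix.diagonal_one]
    rw [funext (fun i => mul_inv_cancel₀ (hw0 i).ne' : ∀ i, w0 i * (w0 i)⁻¹ = (1:ℝ))]
  have hsplit : Matrix.diagonal w0 * M
      = Bp * (Matrix.diagonal wp * Matrix.diagonal (fun _ : Fin np => α)) * Bp.conjTranspose
        + (Bm * Matrix.diagonal w0).conjTranspose
          * (Matrix.diagonal (fun j => (wm j)⁻¹) * Matrix.diagonal (fun _ : Fin nm => β))
          * (Bm * Matrix.diagonal w0) := by
    rw [hM]
    simp only [Matrix.conjTranspose_mul, Matrix.conjTranspose_eq_transpose_of_trivial,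
      Matrix.transpose_mul, Matrix.diagonal_transpose, Matrix.mul_add, Matrix.mul_assoc]
    rw [← Matrix.mul_assoc (Matrix.diagonal w0) (Matrix.diagonal fun i => (w0 i)⁻¹), hW,
      Matrix.one_mul]
  have h1 : (Bp * (Matrix.diagonal wp * Matrix.diagonal (fun _ : Fin np => α))
      * Bp.conjTranspose).PosSemidef := by
    rw [Matrix.diagonal_mul_diagonal]
    exact (Matrix.posSemidef_diagonal_iff.mpr
      (fun i => mul_nonneg (hwp i).le hα.le)).mul_mul_conjTranspose_same Bp
  have h2 : ((Bm * Matrix.diagonal w0).conjTranspose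
      * (Matrix.diagonal (fun j => (wm j)⁻¹) * Matrix.diagonal (fun _ : Fin nm => β))
      * (Bm * Matrix.diagonal w0)).PosSemidef := by
    rw [Matrix.diagonal_mul_diagonal]
    exact (Matrix.posSemidef_diagonal_iff.mpr
      (fun j => mul_nonneg (inv_nonneg.mpr (hwm j).le) hβ.le)).conjTranspose_mul_mul_same
      (Bm * Matrix.diagonal w0)
  have hpos : 0 ≤ ((Matrix.diagonal w0).mulVec z) ⬝ᵥ M.mulVec z := by
    rw [key, hsplit, Matrix.add_mulVec, dotProduct_add]
    have e1 := h1.dotProduct_mulVec_nonneg z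
    have e2 := h2.dotProduct_mulVec_nonneg z
    simp only [star_trivial, RCLike.re_to_real] at e1 e2
    exact add_nonneg e1 e2
  rw [Matrix.neg_mulVec, dotProduct_neg]
  linarith
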